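/- Let ℓ, n ∈ ℕ and k, ε ≥ 0. Let X and Y be independent probability distributions on 𝔽_{2^ℓ}ⁿ such that H_∞(X) ≥ k and Y is ε-small-biased. Then the statistical distance between X + Y (coordinatewise addition in 𝔽_{2^ℓ}) and the uniform distribution on 𝔽_{2^ℓ}ⁿ is at most 2^{(nℓ − k)/2 − 1}·ε. -/

import Mathlib

open Finset

/-- Statistical distance between two (mass functions of) distributions on a finite set. -/
noncomputable def SD {Ω : Type*} [Fintype Ω] (p q : Ω → ℝ) : ℝ :=
  (∑ ω, |p ω - q ω|) / 2

/-- Min-entropy of a distribution on a finite set: `-log₂ (max_ω p ω)`. -/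
noncomputable def minEntropy {Ω : Type*} [Fintype Ω] (p : Ω → ℝ) : ℝ :=
  - Real.logb 2 (⨆ ω, p ω)

/-- `(-1)^(Tr y)` where `Tr : 𝔽_{2^ℓ} → 𝔽₂`, `Tr y = y + y² + y⁴ + ⋯ + y^(2^(ℓ-1))`,
is the field trace (which takes values in {0,1}). -/
def chr {F : Type*} [Field F] [DecidableEq F] (ℓ : ℕ) (y : F) : ℝ :=
  if (∑ i ∈ Finset.range ℓ, y ^ (2 ^ i)) = 0 then 1 else -1

/-- `bias(X, α) = |E_{x←X} (-1)^(Tr ⟨x,α⟩)|`. -/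
noncomputable def bias {F : Type*} [Field F] [DecidableEq F] [Fintype F] (ℓ n : ℕ)
    (p : (Fin n → F) → ℝ) (α : Fin n → F) : ℝ :=
  |∑ x, p x * chr ℓ (∑ i, x i * α i)|

namespace SBM
variable {F : Type*} [Field F] [Fintype F] [DecidableEq F] {ℓ : ℕ}

def trF (ℓ : ℕ) (y : F) : F := ∑ i ∈ Finset.range ℓ, y ^ (2 ^ i)

lemma ell_pos (hF : Fintype.card F = 2 ^ ℓ) : 1 ≤ ℓ := by
  by_contra h
  interval_cases ℓ
  · have := Fintype.one_lt_card (α := F)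
    omega

lemma char2 (hF : Fintype.card F = 2 ^ ℓ) : CharP F 2 := by
  haveI := ringChar.charP F
  obtain ⟨m, hp, hcard⟩ := FiniteField.card F (ringChar F)
  have h2 : (2:ℕ) ∣ ringChar F := by
    have : (2:ℕ) ∣ ringChar F ^ (m:ℕ) := by
      rw [← hcard, hF]
      exact dvd_pow_self 2 (by have := ell_pos hF; omega)
    exact (Nat.Prime.dvd_of_dvd_pow Nat.prime_two this)
  have : ringChar F = 2 := ((Nat.prime_dvd_prime_iff_eq Nat.prime_two hp).mp h2).symm
  exact this ▸ ringChar.charP F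

lemma trF_add (hF : Fintype.card F = 2 ^ ℓ) (a b : F) :
    trF ℓ (a + b) = trF ℓ a + trF ℓ b := by
  haveI := char2 hF
  haveI : Fact (Nat.Prime 2) := ⟨Nat.prime_two⟩
  simp [trF, add_pow_char_pow, Finset.sum_add_distrib]

lemma trF_mem (hF : Fintype.card F = 2 ^ ℓ) (a : F) : trF ℓ a = 0 ∨ trF ℓ a = 1 := by
  haveI := char2 hF
  haveI : Fact (Nat.Prime 2) := ⟨Nat.prime_two⟩
  obtain ⟨m, rfl⟩ : ∃ m, ℓ = m + 1 := ⟨ℓ - 1, by have := ell_pos hF; omega⟩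
  have hsq : trF (m+1) a ^ 2 = trF (m+1) a := by
    have h1 : trF (m+1) a ^ 2 = ∑ i ∈ Finset.range (m+1), a ^ (2 ^ (i+1)) := by
      rw [trF, sum_pow_char]
      refine Finset.sum_congr rfl fun i _ => ?_
      rw [← pow_mul, pow_succ]
    rw [h1, Finset.sum_range_succ, trF, Finset.sum_range_succ']
    have : a ^ 2 ^ (m + 1) = a := by
      rw [← hF]; exact FiniteField.pow_card a
    rw [this]
    simp [add_comm]
  have : trF (m+1) a * (trF (m+1) a - 1) = 0 := by linear_combination hsq
  rcases mul_eq_zero.mp this with h | h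
  · exact Or.inl h
  · exact Or.inr (sub_eq_zero.mp h)


lemma chr_def (y : F) : chr ℓ y = if trF ℓ y = 0 then 1 else -1 := rfl

lemma chr_zero : chr ℓ (0:F) = 1 := by
  simp [chr_def, trF]

lemma one_add_one (hF : Fintype.card F = 2 ^ ℓ) : (1:F) + 1 = 0 := by
  haveI := char2 hF
  exact CharTwo.add_self_eq_zero 1

lemma chr_add (hF : Fintype.card F = 2 ^ ℓ) (a b : F) :
    chr ℓ (a + b) = chr ℓ a * chr ℓ b := by
  have h := trF_add hF a b
  rcases trF_mem hF a with ha | ha <;> rcases trF_mem hF b with hb | hb <;>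
    simp [chr_def, h, ha, hb, one_add_one hF, one_ne_zero]

lemma exists_trF_ne (hF : Fintype.card F = 2 ^ ℓ) : ∃ c : F, trF ℓ c ≠ 0 := by
  by_contra hall
  push_neg at hall
  set p : Polynomial F := ∑ i ∈ Finset.range ℓ, Polynomial.X ^ (2 ^ i) with hp
  have heval : ∀ a : F, p.eval a = trF ℓ a := by
    intro a; simp [hp, trF, Polynomial.eval_finset_sum]
  have hdeg : p.natDegree < Fintype.card F := by
    have h1 : p.natDegree ≤ 2 ^ (ℓ - 1) := by
      apply Polynomial.natDegree_sum_le_of_forall_le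
      intro i hi
      rw [Polynomial.natDegree_X_pow]
      exact Nat.pow_le_pow_right (by norm_num) (by simp at hi; omega)
    rw [hF]
    calc p.natDegree ≤ 2 ^ (ℓ - 1) := h1
      _ < 2 ^ ℓ := Nat.pow_lt_pow_right (by norm_num) (by have := ell_pos hF; omega)
  have hp0 : p = 0 :=
    Polynomial.eq_zero_of_natDegree_lt_card_of_eval_eq_zero p Function.injective_id
      (fun a => by rw [heval]; exact hall a) hdeg
  have hc : p.coeff 1 = 1 := by
    rw [hp, Polynomial.finset_sum_coeff]
    rw [Finset.sum_eq_single 0]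
    · simp
    · intro i hi hne
      rw [Polynomial.coeff_X_pow]
      have : (2:ℕ) ^ i ≠ 1 := by
        have : 1 < 2 ^ i := Nat.one_lt_two_pow hne
        omega
      simp [this.symm, Ne.symm this]
    · intro h
      exact absurd (Finset.mem_range.mpr (by have := ell_pos hF; omega)) h
  rw [hp0] at hc
  simp at hc

lemma chr_exists_neg (hF : Fintype.card F = 2 ^ ℓ) : ∃ c : F, chr ℓ c = -1 := by
  obtain ⟨c, hc⟩ := exists_trF_ne hF
  exact ⟨c, by simp [chr_def, hc]⟩


variable {n : ℕ}

lemma ip_add (x y α : Fin n → F) :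
    ∑ i, (x + y) i * α i = (∑ i, x i * α i) + ∑ i, y i * α i := by
  rw [← Finset.sum_add_distrib]
  exact Finset.sum_congr rfl fun i _ => by simp [add_mul]

lemma sum_chr_left (hF : Fintype.card F = 2 ^ ℓ) {α : Fin n → F} (hα : α ≠ 0) :
    ∑ x : Fin n → F, chr ℓ (∑ i, x i * α i) = 0 := by
  obtain ⟨i, hi⟩ : ∃ i, α i ≠ 0 := by
    by_contra h; push_neg at h; exact hα (funext fun i => h i)
  obtain ⟨c, hc⟩ := chr_exists_neg hF
  set w : Fin n → F := fun j => if j = i then c * (α i)⁻¹ else 0 with hw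
  have hwα : ∑ j, w j * α j = c := by
    rw [Finset.sum_eq_single i]
    · simp [hw, inv_mul_cancel₀ hi, mul_assoc]
    · intro j _ hj; simp [hw, hj]
    · simp
  have key : ∀ x : Fin n → F, chr ℓ (∑ j, (x + w) j * α j) = - chr ℓ (∑ j, x j * α j) := by
    intro x
    rw [ip_add, hwα, chr_add hF, hc]
    ring
  have hbij : ∑ x : Fin n → F, chr ℓ (∑ j, (x + w) j * α j)
      = ∑ x : Fin n → F, chr ℓ (∑ j, x j * α j) :=
    Fintype.sum_equiv (Equiv.addRight w) _ _ (fun x => rfl)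
  have := hbij.symm.trans (Finset.sum_congr rfl fun x _ => key x)
  rw [Finset.sum_neg_distrib] at this
  linarith

lemma sum_chr_right (hF : Fintype.card F = 2 ^ ℓ) {w : Fin n → F} (hw : w ≠ 0) :
    ∑ α : Fin n → F, chr ℓ (∑ i, w i * α i) = 0 := by
  have : ∀ α : Fin n → F, (∑ i, w i * α i) = ∑ i, α i * w i := by
    intro α; exact Finset.sum_congr rfl fun i _ => mul_comm _ _
  simp_rw [this]
  exact sum_chr_left hF hw

lemma card_pi (hF : Fintype.card F = 2 ^ ℓ) :
    Fintype.card (Fin n → F) = 2 ^ (n * ℓ) := by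
  rw [Fintype.card_fun, hF, Fintype.card_fin, ← pow_mul, mul_comm]


lemma parseval (hF : Fintype.card F = 2 ^ ℓ) (f : (Fin n → F) → ℝ) :
    ∑ α : Fin n → F, (∑ x, f x * chr ℓ (∑ i, x i * α i)) ^ 2
      = 2 ^ (n * ℓ) * ∑ x, f x ^ 2 := by
  haveI := char2 hF
  have hsum : ∀ x y : Fin n → F,
      ∑ α : Fin n → F, chr ℓ (∑ i, (x + y) i * α i)
        = if x = y then (2:ℝ) ^ (n * ℓ) else 0 := by
    intro x y
    by_cases hxy : x = y
    · subst hxy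
      have h0 : x + x = 0 := funext fun i => CharTwo.add_self_eq_zero (x i)
      simp only [h0, Pi.zero_apply, zero_mul, Finset.sum_const_zero, chr_zero, if_true]
      rw [Finset.sum_const, Finset.card_univ, card_pi hF]
      simp
    · have hne : x + y ≠ 0 := by
        intro h
        exact hxy (funext fun i => by
          have := congrFun h i
          simp only [Pi.add_apply, Pi.zero_apply] at this
          have h2 := CharTwo.neg_eq (y i)
          rw [add_eq_zero_iff_eq_neg, h2] at this
          exact this)
      rw [sum_chr_right hF hne, if_neg hxy]
  calc ∑ α : Fin n → F, (∑ x, f x * chr ℓ (∑ i, x i * α i)) ^ 2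
      = ∑ α : Fin n → F, ∑ x : Fin n → F, ∑ y : Fin n → F,
          (f x * f y) * chr ℓ (∑ i, (x + y) i * α i) := by
        refine Finset.sum_congr rfl fun α _ => ?_
        rw [sq, Finset.sum_mul_sum]
        refine Finset.sum_congr rfl fun x _ => Finset.sum_congr rfl fun y _ => ?_
        rw [ip_add, chr_add hF]
        ring
    _ = ∑ x : Fin n → F, ∑ y : Fin n → F,
          (f x * f y) * ∑ α : Fin n → F, chr ℓ (∑ i, (x + y) i * α i) := by
        rw [Finset.sum_comm]
        refine Finset.sum_congr rfl fun x _ => ?_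
        rw [Finset.sum_comm]
        refine Finset.sum_congr rfl fun y _ => ?_
        rw [Finset.mul_sum]
    _ = ∑ x : Fin n → F, f x ^ 2 * 2 ^ (n * ℓ) := by
        refine Finset.sum_congr rfl fun x _ => ?_
        simp only [hsum, mul_ite, mul_zero]
        rw [Finset.sum_ite_eq]
        simp [sq]
    _ = 2 ^ (n * ℓ) * ∑ x, f x ^ 2 := by
        rw [← Finset.sum_mul]; ring

end SBM


/-- **Small-biased masking lemma.**  If `X` has min-entropy at least `k` and `Y` is
`ε`-small-biased (both distributions on `𝔽_{2^ℓ}ⁿ`, independent), then `X + Y` is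
`2^((nℓ-k)/2 - 1)·ε`-close to uniform in statistical distance. -/
theorem small_biased_masking (ℓ n : ℕ) (k ε : ℝ) (hk : 0 ≤ k) (hε : 0 ≤ ε)
    (F : Type*) [Field F] [Fintype F] [DecidableEq F] (hF : Fintype.card F = 2 ^ ℓ)
    (X Y : (Fin n → F) → ℝ)
    (hX0 : ∀ x, 0 ≤ X x) (hX1 : ∑ x, X x = 1)
    (hY0 : ∀ y, 0 ≤ Y y) (hY1 : ∑ y, Y y = 1)
    (hXent : k ≤ minEntropy X)
    (hYbias : ∀ α : Fin n → F, α ≠ 0 → bias ℓ n Y α ≤ ε) :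
    SD (fun w => ∑ x, X x * Y (w - x)) (fun _ : Fin n → F => 1 / 2 ^ (n * ℓ)) ≤
      (2 : ℝ) ^ (((n * ℓ : ℝ) - k) / 2 - 1) * ε := by
  classical
  have hN : (0:ℝ) < 2 ^ (n * ℓ) := by positivity
  set U : ℝ := 1 / 2 ^ (n * ℓ) with hUdef
  set Z : (Fin n → F) → ℝ := fun w => ∑ x, X x * Y (w - x) with hZdef
  set Xh : (Fin n → F) → ℝ := fun α => ∑ x, X x * chr ℓ (∑ i, x i * α i) with hXhdef
  set Yh : (Fin n → F) → ℝ := fun α => ∑ x, Y x * chr ℓ (∑ i, x i * α i) with hYhdef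
  -- max bound from min-entropy
  have hXmax : ∀ x, X x ≤ (2:ℝ) ^ (-k : ℝ) := by
    have hbdd : BddAbove (Set.range X) := Set.Finite.bddAbove (Set.finite_range X)
    have hs : ∀ x, X x ≤ ⨆ ω, X ω := fun x => le_ciSup hbdd x
    have hspos : 0 < ⨆ ω, X ω := by
      obtain ⟨x0, hx0⟩ : ∃ x, 0 < X x := by
        by_contra h; push_neg at h
        have h0 : ∑ x, X x = 0 :=
          Finset.sum_eq_zero fun x _ => le_antisymm (h x) (hX0 x)
        rw [hX1] at h0; norm_num at h0
      exact lt_of_lt_of_le hx0 (hs x0)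
    have hlog : Real.logb 2 (⨆ ω, X ω) ≤ -k := by
      unfold minEntropy at hXent; linarith
    have hle := (Real.logb_le_iff_le_rpow (by norm_num) hspos).mp hlog
    exact fun x => (hs x).trans hle
  -- Fourier coefficient of Z
  have hZhat : ∀ α : Fin n → F,
      (∑ w, Z w * chr ℓ (∑ i, w i * α i)) = Xh α * Yh α := by
    intro α
    have step1 : ∀ x : Fin n → F,
        (∑ w : Fin n → F, Y (w - x) * chr ℓ (∑ i, w i * α i))
          = chr ℓ (∑ i, x i * α i) * Yh α := by
      intro x
      have hb := Fintype.sum_equiv (Equiv.addRight x)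
        (fun y : Fin n → F => Y y * chr ℓ (∑ i, (y + x) i * α i))
        (fun w : Fin n → F => Y (w - x) * chr ℓ (∑ i, w i * α i))
        (fun y => by simp)
      rw [← hb]
      simp_rw [SBM.ip_add, SBM.chr_add hF]
      simp only [hYhdef]
      rw [Finset.mul_sum]
      exact Finset.sum_congr rfl fun y _ => by ring
    calc ∑ w, Z w * chr ℓ (∑ i, w i * α i)
        = ∑ w : Fin n → F, ∑ x : Fin n → F,
            X x * (Y (w - x) * chr ℓ (∑ i, w i * α i)) := by
          refine Finset.sum_congr rfl fun w _ => ?_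
          rw [hZdef, Finset.sum_mul]
          exact Finset.sum_congr rfl fun x _ => by ring
      _ = ∑ x : Fin n → F, X x * ∑ w : Fin n → F,
            Y (w - x) * chr ℓ (∑ i, w i * α i) := by
          rw [Finset.sum_comm]
          exact Finset.sum_congr rfl fun x _ => by rw [Finset.mul_sum]
      _ = ∑ x : Fin n → F, X x * (chr ℓ (∑ i, x i * α i) * Yh α) := by
          simp_rw [step1]
      _ = Xh α * Yh α := by
          simp only [hXhdef]
          rw [Finset.sum_mul]
          exact Finset.sum_congr rfl fun x _ => by ring
  have hXh0 : Xh 0 = 1 := by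
    simp only [hXhdef]
    simp only [Pi.zero_apply, mul_zero, Finset.sum_const_zero, SBM.chr_zero, mul_one]
    exact hX1
  have hYh0 : Yh 0 = 1 := by
    simp only [hYhdef]
    simp only [Pi.zero_apply, mul_zero, Finset.sum_const_zero, SBM.chr_zero, mul_one]
    exact hY1
  have hUhat : ∀ α : Fin n → F,
      (∑ w : Fin n → F, U * chr ℓ (∑ i, w i * α i)) = if α = 0 then 1 else 0 := by
    intro α
    rw [← Finset.mul_sum]
    by_cases hα : α = 0
    · subst hα
      simp only [Pi.zero_apply, mul_zero, Finset.sum_const_zero, SBM.chr_zero,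
        Finset.sum_const, Finset.card_univ, SBM.card_pi hF, if_true]
      simp only [hUdef]
      push_cast
      field_simp
      simp
    · rw [SBM.sum_chr_left hF hα, if_neg hα, mul_zero]
  have hfhat : ∀ α : Fin n → F,
      (∑ w, (Z w - U) * chr ℓ (∑ i, w i * α i))
        = if α = 0 then 0 else Xh α * Yh α := by
    intro α
    have : ∀ w : Fin n → F, (Z w - U) * chr ℓ (∑ i, w i * α i)
        = Z w * chr ℓ (∑ i, w i * α i) - U * chr ℓ (∑ i, w i * α i) :=
      fun w => by ring
    rw [Finset.sum_congr rfl fun w _ => this w, Finset.sum_sub_distrib, hZhat, hUhat]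
    by_cases hα : α = 0
    · subst hα; rw [hXh0, hYh0]; simp
    · simp [hα]
  -- Parseval for f := Z - U
  have hpar := SBM.parseval hF (fun w => Z w - U)
  have hparX := SBM.parseval hF X
  -- bias bound on Yh
  have hYhb : ∀ α : Fin n → F, α ≠ 0 → Yh α ^ 2 ≤ ε ^ 2 := by
    intro α hα
    have := hYbias α hα
    rw [bias] at this
    have h2 := abs_le.mp this
    exact sq_le_sq' (by linarith [h2.1]) h2.2
  -- sum of squares bound
  have hsumsq : ∑ w : Fin n → F, (Z w - U) ^ 2 ≤ ε ^ 2 * (2:ℝ) ^ (-k : ℝ) := by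
    have h1 : ∑ α : Fin n → F, (∑ w, (Z w - U) * chr ℓ (∑ i, w i * α i)) ^ 2
        ≤ ε ^ 2 * ∑ α : Fin n → F, Xh α ^ 2 := by
      rw [Finset.mul_sum]
      refine Finset.sum_le_sum fun α _ => ?_
      rw [hfhat α]
      by_cases hα : α = 0
      · simp [hα]; positivity
      · rw [if_neg hα, mul_pow]
        calc Xh α ^ 2 * Yh α ^ 2 ≤ Xh α ^ 2 * ε ^ 2 :=
              mul_le_mul_of_nonneg_left (hYhb α hα) (sq_nonneg _)
          _ = ε ^ 2 * Xh α ^ 2 := by ring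
    have h2 : ∑ x, X x ^ 2 ≤ (2:ℝ) ^ (-k : ℝ) := by
      calc ∑ x, X x ^ 2 ≤ ∑ x, (2:ℝ) ^ (-k : ℝ) * X x := by
            refine Finset.sum_le_sum fun x _ => ?_
            rw [sq]
            exact mul_le_mul_of_nonneg_right (hXmax x) (hX0 x)
        _ = (2:ℝ) ^ (-k : ℝ) := by rw [← Finset.mul_sum, hX1, mul_one]
    have h3 : (2:ℝ) ^ (n*ℓ) * ∑ w : Fin n → F, (Z w - U) ^ 2
        ≤ (2:ℝ) ^ (n*ℓ) * (ε ^ 2 * (2:ℝ) ^ (-k : ℝ)) := by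
      rw [← hpar]
      calc ∑ α : Fin n → F, (∑ w, (Z w - U) * chr ℓ (∑ i, w i * α i)) ^ 2
          ≤ ε ^ 2 * ∑ α : Fin n → F, Xh α ^ 2 := h1
        _ = ε ^ 2 * ((2:ℝ) ^ (n*ℓ) * ∑ x, X x ^ 2) := by simp only [hXhdef]; rw [hparX]
        _ ≤ ε ^ 2 * ((2:ℝ) ^ (n*ℓ) * (2:ℝ) ^ (-k : ℝ)) := by
            have := mul_le_mul_of_nonneg_left h2 (le_of_lt hN)
            exact mul_le_mul_of_nonneg_left this (sq_nonneg ε)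
        _ = (2:ℝ) ^ (n*ℓ) * (ε ^ 2 * (2:ℝ) ^ (-k : ℝ)) := by ring
    exact le_of_mul_le_mul_left h3 hN
  -- Cauchy-Schwarz
  have hCS : (∑ w : Fin n → F, |Z w - U|) ^ 2
      ≤ (2:ℝ) ^ (n*ℓ) * (ε ^ 2 * (2:ℝ) ^ (-k : ℝ)) := by
    calc (∑ w : Fin n → F, |Z w - U|) ^ 2
        ≤ (Finset.univ.card : ℝ) * ∑ w : Fin n → F, |Z w - U| ^ 2 :=
          sq_sum_le_card_mul_sum_sq
      _ = (2:ℝ) ^ (n*ℓ) * ∑ w : Fin n → F, (Z w - U) ^ 2 := by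
          rw [Finset.card_univ, SBM.card_pi hF]
          push_cast
          congr 1
          exact Finset.sum_congr rfl fun w _ => sq_abs _
      _ ≤ (2:ℝ) ^ (n*ℓ) * (ε ^ 2 * (2:ℝ) ^ (-k : ℝ)) :=
          mul_le_mul_of_nonneg_left hsumsq (le_of_lt hN)
  -- final arithmetic
  set C : ℝ := (2:ℝ) ^ (((n * ℓ : ℝ) - k) / 2) * ε with hCdef
  have hC0 : 0 ≤ C := by positivity
  have hCsq : C ^ 2 = (2:ℝ) ^ (n*ℓ) * (ε ^ 2 * (2:ℝ) ^ (-k : ℝ)) := by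
    have hexp : ((n * ℓ : ℝ) - k) / 2 + ((n * ℓ : ℝ) - k) / 2
        = ((n * ℓ : ℕ) : ℝ) + (-k) := by push_cast; ring
    rw [hCdef, mul_pow, sq, ← Real.rpow_add (by norm_num : (0:ℝ) < 2), hexp,
      Real.rpow_add (by norm_num : (0:ℝ) < 2), Real.rpow_natCast]
    ring
  have hS0 : 0 ≤ ∑ w : Fin n → F, |Z w - U| :=
    Finset.sum_nonneg fun w _ => abs_nonneg _
  have hSC : (∑ w : Fin n → F, |Z w - U|) ≤ C := by
    have hsq := hCS
    rw [← hCsq] at hsq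
    by_contra h
    push_neg at h
    nlinarith
  have hSD : SD Z (fun _ : Fin n → F => U) = (∑ w : Fin n → F, |Z w - U|) / 2 := rfl
  have hfinal : (2:ℝ) ^ (((n * ℓ : ℝ) - k) / 2 - 1) * ε = C / 2 := by
    rw [hCdef, Real.rpow_sub (by norm_num : (0:ℝ) < 2), Real.rpow_one]
    ring
  rw [hSD, hfinal]
  linarith
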